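/- Let V be a symmetric positive definite m×m matrix and R a symmetric matrix with −R nonnegative definite. Then ½ Tr(V − R V⁻¹) ≥ Tr √(−R). -/

import Mathlib

open Matrix
/-- The positive semidefinite square root of a positive semidefinite matrix (the definition
that Mathlib had in December 2024, since removed). -/
noncomputable def Matrix.PosSemidef.sqrt {n : Type*} [Fintype n] [DecidableEq n]
    {A : Matrix n n ℝ} (hA : A.PosSemidef) : Matrix n n ℝ :=
  hA.1.eigenvectorUnitary.1 * diagonal ((√·) ∘ hA.1.eigenvalues) *
  (star hA.1.eigenvectorUnitary : Matrix n n ℝ)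

lemma Matrix.PosSemidef.sqrt_mul_self {n : Type*} [Fintype n] [DecidableEq n]
    {A : Matrix n n ℝ} (hA : A.PosSemidef) : hA.sqrt * hA.sqrt = A := by
  have hU : (star hA.1.eigenvectorUnitary : Matrix n n ℝ) * hA.1.eigenvectorUnitary.1 = 1 :=
    Unitary.star_mul_self_of_mem hA.1.eigenvectorUnitary.2
  conv_rhs => rw [hA.1.spectral_theorem, Unitary.conjStarAlgAut_apply]
  unfold Matrix.PosSemidef.sqrt
  rw [show ∀ a b c d e f : Matrix n n ℝ, a * b * c * (d * e * f) = a * b * (c * d) * e * f by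
    intros; simp only [Matrix.mul_assoc]]
  rw [hU, Matrix.mul_one, Matrix.mul_assoc _ (diagonal _) (diagonal _), diagonal_mul_diagonal]
  congr 3
  funext i
  simp [Real.mul_self_sqrt (hA.eigenvalues_nonneg i)]

lemma Matrix.PosSemidef.posSemidef_sqrt {n : Type*} [Fintype n] [DecidableEq n]
    {A : Matrix n n ℝ} (hA : A.PosSemidef) : hA.sqrtᵀ = hA.sqrt ∧ True := by
  refine ⟨?_, trivial⟩
  unfold Matrix.PosSemidef.sqrt
  simp [Matrix.star_eq_conjTranspose, Matrix.conjTranspose_eq_transpose_of_trivial, Matrix.mul_assoc]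

lemma trace_transpose_mul_le {m : ℕ} (A B : Matrix (Fin m) (Fin m) ℝ) :
    (Aᵀ * B).trace ≤ (1 / 2) * ((Aᵀ * A).trace + (Bᵀ * B).trace) := by
  simp only [Matrix.trace, Matrix.diag, Matrix.mul_apply, Matrix.transpose_apply]
  rw [← Finset.sum_add_distrib, Finset.mul_sum]
  apply Finset.sum_le_sum; intro i _
  rw [← Finset.sum_add_distrib, Finset.mul_sum]
  apply Finset.sum_le_sum; intro j _
  nlinarith [sq_nonneg (A j i - B j i)]

/-- For `V` symmetric positive definite and `-R` nonnegative definite,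
`½ Tr(V - R V⁻¹) ≥ Tr √(-R)`. -/
theorem stmt14 {m : ℕ} (V R : Matrix (Fin m) (Fin m) ℝ)
    (hV : V.PosDef) (hRsym : R.IsSymm) (hR : (-R).PosSemidef) :
    hR.sqrt.trace ≤ (1 / 2) * (V - R * V⁻¹).trace := by
  set W := hV.posSemidef.sqrt with hWdef
  set S := hR.sqrt with hSdef
  have hWW : W * W = V := hV.posSemidef.sqrt_mul_self
  have hSS : S * S = -R := hR.sqrt_mul_self
  have hWsym : Wᵀ = W := by
    have := hV.posSemidef.posSemidef_sqrt.1
    simpa [Matrix.IsHermitian, Matrix.conjTranspose] using this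
  have hSsym : Sᵀ = S := by
    have := hR.posSemidef_sqrt.1
    simpa [Matrix.IsHermitian, Matrix.conjTranspose] using this
  have hdet : IsUnit W.det := by
    have hVdet : V.det ≠ 0 := hV.det_pos.ne'
    rw [← hWW, Matrix.det_mul] at hVdet
    exact isUnit_iff_ne_zero.mpr fun h => hVdet (by rw [h, mul_zero])
  have hWinv : W⁻¹ * W = 1 := Matrix.nonsing_inv_mul W hdet
  have hVinv : V⁻¹ = W⁻¹ * W⁻¹ := by rw [← hWW, Matrix.mul_inv_rev]
  have h1 : S.trace = (Wᵀ * (S * W⁻¹)).trace := by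
    rw [hWsym, Matrix.trace_mul_comm, Matrix.mul_assoc, hWinv, Matrix.mul_one]
  have h2 : ((S * W⁻¹)ᵀ * (S * W⁻¹)).trace = ((-R) * V⁻¹).trace := by
    rw [Matrix.transpose_mul, Matrix.transpose_nonsing_inv, hWsym, hSsym,
      hVinv]
    rw [show W⁻¹ * S * (S * W⁻¹) = W⁻¹ * ((S * S) * W⁻¹) by
      simp [Matrix.mul_assoc], Matrix.trace_mul_comm, hSS, Matrix.mul_assoc]
  have h3 : (Wᵀ * W).trace = V.trace := by rw [hWsym, hWW]
  have key := trace_transpose_mul_le W (S * W⁻¹)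
  rw [← h1, h2, h3] at key
  have h4 : (V - R * V⁻¹).trace = V.trace + ((-R) * V⁻¹).trace := by
    rw [Matrix.trace_sub, Matrix.neg_mul, Matrix.trace_neg]; ring
  rw [h4]
  exact key
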